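/- The Constrained Aumann–Shapley allocation of IMCC is a full allocation (Proposition 3.8): Let N be a positive integer and for each i ∈ Fin 6 and j ∈ Fin 5 let g_{ij} : (Fin N → ℝ) → ℝ be positively homogeneous of degree 1 and Fréchet differentiable at the all-ones vector 𝟙, with g_{ij}(𝟙) ≠ 0. For a permutation σ of Fin 5 define η(σ,i,j) = ( sqrt(∑_{s ≤ σ⁻¹(j)} g_{i,σ(s)}(𝟙)²) − sqrt(∑_{s < σ⁻¹(j)} g_{i,σ(s)}(𝟙)²) ) / g_{ij}(𝟙), and define CAS_n(σ,i,j) = η(σ,i,j) · (fderiv ℝ g_{ij} 𝟙)(e_n). Given real numbers s_i, define the CAS allocation of IMCC by IMCC^C_n(i,j) = 0.5 · s_i · (1/5!) · ∑_{σ ∈ Perm(Fin 5)} CAS_n(σ,i,j). Then ∑_{n ∈ Fin N} ∑_{i ∈ Fin 6} ∑_{j ∈ Fin 5} IMCC^C_n(i,j) = 0.5 · ∑_{i ∈ Fin 6} s_i · sqrt(∑_{j ∈ Fin 5} g_{ij}(𝟙)²). -/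

import Mathlib

lemma euler_aux {N : ℕ} (f : (Fin N → ℝ) → ℝ)
    (hhom : ∀ (a : ℝ), 0 ≤ a → ∀ v, f (a • v) = a * f v)
    (hdiff : DifferentiableAt ℝ f (1 : Fin N → ℝ)) :
    (fderiv ℝ f (1 : Fin N → ℝ)) (1 : Fin N → ℝ) = f 1 := by
  have hc : HasDerivAt (fun a : ℝ => a • (1 : Fin N → ℝ)) (1 : Fin N → ℝ) 1 := by
    simpa using (hasDerivAt_id (1 : ℝ)).smul_const (1 : Fin N → ℝ)
  have h1 : HasDerivAt (fun a : ℝ => f (a • (1 : Fin N → ℝ)))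
      ((fderiv ℝ f (1 : Fin N → ℝ)) (1 : Fin N → ℝ)) 1 := by
    have := HasFDerivAt.comp_hasDerivAt 1 (by rw [one_smul]; exact hdiff.hasFDerivAt) hc
    exact this
  have h2 : HasDerivAt (fun a : ℝ => f (a • (1 : Fin N → ℝ))) (f 1) 1 := by
    have h3 : HasDerivAt (fun a : ℝ => a * f 1) (f 1) 1 := by
      simpa using (hasDerivAt_id (1 : ℝ)).mul_const (f 1)
    refine h3.congr_of_eventuallyEq ?_
    filter_upwards [eventually_gt_nhds (by norm_num : (0 : ℝ) < 1)] with a ha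
    rw [hhom a ha.le]
  exact h1.unique h2

lemma telescope_aux (b : Fin 5 → ℝ) (hb : ∀ j, b j ≠ 0) (σ : Equiv.Perm (Fin 5)) :
    ∑ j : Fin 5, ((Real.sqrt (∑ t ∈ Finset.univ.filter (fun t => t ≤ σ.symm j), (b (σ t)) ^ 2)
      - Real.sqrt (∑ t ∈ Finset.univ.filter (fun t => t < σ.symm j), (b (σ t)) ^ 2))
        / b j) * b j
    = Real.sqrt (∑ j, (b j) ^ 2) := by
  have hdm : ∀ j : Fin 5, ∀ x : ℝ, x / b j * b j = x := fun j x => div_mul_cancel₀ x (hb j)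
  simp only [hdm]
  rw [← Equiv.sum_comp σ (fun j => ((Real.sqrt (∑ t ∈ Finset.univ.filter (fun t => t ≤ σ.symm j), (b (σ t)) ^ 2)
      - Real.sqrt (∑ t ∈ Finset.univ.filter (fun t => t < σ.symm j), (b (σ t)) ^ 2))))]
  simp only [Equiv.symm_apply_apply]
  rw [← Equiv.sum_comp σ (fun j => (b j) ^ 2)]
  have e0 : (Finset.univ.filter (fun t : Fin 5 => t ≤ 0)) = {0} := by decide
  have e1 : (Finset.univ.filter (fun t : Fin 5 => t ≤ 1)) = {0, 1} := by decide
  have e2 : (Finset.univ.filter (fun t : Fin 5 => t ≤ 2)) = {0, 1, 2} := by decide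
  have e3 : (Finset.univ.filter (fun t : Fin 5 => t ≤ 3)) = {0, 1, 2, 3} := by decide
  have e4 : (Finset.univ.filter (fun t : Fin 5 => t ≤ 4)) = {0, 1, 2, 3, 4} := by decide
  have f0 : (Finset.univ.filter (fun t : Fin 5 => t < 0)) = ∅ := by decide
  have f1 : (Finset.univ.filter (fun t : Fin 5 => t < 1)) = {0} := by decide
  have f2 : (Finset.univ.filter (fun t : Fin 5 => t < 2)) = {0, 1} := by decide
  have f3 : (Finset.univ.filter (fun t : Fin 5 => t < 3)) = {0, 1, 2} := by decide
  have f4 : (Finset.univ.filter (fun t : Fin 5 => t < 4)) = {0, 1, 2, 3} := by decide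
  rw [Fin.sum_univ_five, Fin.sum_univ_five, e0, e1, e2, e3, e4, f0, f1, f2, f3, f4]
  simp [Finset.sum_insert, Finset.mem_insert]
  congr 1
  ring

/-- The Constrained Aumann–Shapley allocation of IMCC is a full allocation
(Proposition 3.8). -/
theorem cas_allocation_full {N : ℕ} (hN : 0 < N)
    (g : Fin 6 → Fin 5 → (Fin N → ℝ) → ℝ)
    (hhom : ∀ i j, ∀ (a : ℝ), 0 ≤ a → ∀ v : Fin N → ℝ, g i j (a • v) = a * g i j v)
    (hdiff : ∀ i j, DifferentiableAt ℝ (g i j) (1 : Fin N → ℝ))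
    (hne : ∀ i j, g i j (1 : Fin N → ℝ) ≠ 0)
    (s : Fin 6 → ℝ) :
    ∑ n : Fin N, ∑ i : Fin 6, ∑ j : Fin 5,
        0.5 * s i * ((1 : ℝ) / (Nat.factorial 5))
          * ∑ σ : Equiv.Perm (Fin 5),
              ((Real.sqrt (∑ t ∈ Finset.univ.filter (fun t => t ≤ σ.symm j),
                    (g i (σ t) (1 : Fin N → ℝ)) ^ 2)
                - Real.sqrt (∑ t ∈ Finset.univ.filter (fun t => t < σ.symm j),
                    (g i (σ t) (1 : Fin N → ℝ)) ^ 2))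
                  / g i j (1 : Fin N → ℝ))
                * (fderiv ℝ (g i j) (1 : Fin N → ℝ)) (Pi.single n 1)
      = 0.5 * ∑ i : Fin 6, s i * Real.sqrt (∑ j, (g i j (1 : Fin N → ℝ)) ^ 2) := by
  have hsingle : ∑ n : Fin N, (Pi.single n 1 : Fin N → ℝ) = 1 := by
    have := Finset.univ_sum_single (1 : Fin N → ℝ)
    simpa using this
  set η : Fin 6 → Fin 5 → Equiv.Perm (Fin 5) → ℝ := fun i j σ =>
    (Real.sqrt (∑ t ∈ Finset.univ.filter (fun t => t ≤ σ.symm j),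
        (g i (σ t) (1 : Fin N → ℝ)) ^ 2)
      - Real.sqrt (∑ t ∈ Finset.univ.filter (fun t => t < σ.symm j),
        (g i (σ t) (1 : Fin N → ℝ)) ^ 2)) / g i j (1 : Fin N → ℝ) with hη
  calc ∑ n : Fin N, ∑ i : Fin 6, ∑ j : Fin 5,
        0.5 * s i * ((1 : ℝ) / (Nat.factorial 5))
          * ∑ σ : Equiv.Perm (Fin 5), η i j σ
                * (fderiv ℝ (g i j) (1 : Fin N → ℝ)) (Pi.single n 1)
      = ∑ i : Fin 6, ∑ j : Fin 5, 0.5 * s i * ((1 : ℝ) / (Nat.factorial 5))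
          * ∑ σ : Equiv.Perm (Fin 5), η i j σ * g i j (1 : Fin N → ℝ) := by
        rw [Finset.sum_comm]
        refine Finset.sum_congr rfl fun i _ => ?_
        rw [Finset.sum_comm]
        refine Finset.sum_congr rfl fun j _ => ?_
        rw [← Finset.mul_sum]
        congr 1
        rw [Finset.sum_comm]
        refine Finset.sum_congr rfl fun σ _ => ?_
        rw [← Finset.mul_sum, ← map_sum, hsingle,
          euler_aux (g i j) (hhom i j) (hdiff i j)]
    _ = ∑ i : Fin 6, 0.5 * s i * ((1 : ℝ) / (Nat.factorial 5))
          * ((Nat.factorial 5 : ℝ) * Real.sqrt (∑ j, (g i j (1 : Fin N → ℝ)) ^ 2)) := by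
        refine Finset.sum_congr rfl fun i _ => ?_
        rw [← Finset.mul_sum, Finset.sum_comm]
        congr 1
        have hT : ∀ σ : Equiv.Perm (Fin 5),
            ∑ j : Fin 5, η i j σ * g i j (1 : Fin N → ℝ)
              = Real.sqrt (∑ j, (g i j (1 : Fin N → ℝ)) ^ 2) := fun σ =>
          telescope_aux (fun j => g i j (1 : Fin N → ℝ)) (hne i) σ
        rw [Finset.sum_congr rfl fun σ _ => hT σ, Finset.sum_const, Finset.card_univ,
          Fintype.card_perm, Fintype.card_fin, nsmul_eq_mul]
    _ = 0.5 * ∑ i : Fin 6, s i * Real.sqrt (∑ j, (g i j (1 : Fin N → ℝ)) ^ 2) := by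
        rw [Finset.mul_sum]
        refine Finset.sum_congr rfl fun i _ => ?_
        have : (Nat.factorial 5 : ℝ) ≠ 0 := by positivity
        field_simp
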